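/- Let V and W be finite-dimensional real vector spaces, p : V → W a linear map, and Γ ⊆ V a closed convex cone. Then the restriction of p to Γ is a proper map if and only if ker p ∩ Γ = {0}. -/
import Mathlib

open Set

/-- Let `V, W` be finite-dimensional real vector spaces, `p : V → W` linear and
`Γ ⊆ V` a closed convex cone.  Then `p` restricted to `Γ` is a proper map if and only if
`ker p ∩ Γ = {0}`. -/
theorem stmt_1 {V W : Type*} [NormedAddCommGroup V] [NormedSpace ℝ V] [FiniteDimensional ℝ V]
    [NormedAddCommGroup W] [NormedSpace ℝ W] [FiniteDimensional ℝ W]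
    (p : V →ₗ[ℝ] W) (Γ : Set V) (hΓ : IsClosed Γ) (h0 : (0 : V) ∈ Γ)
    (hadd : ∀ x ∈ Γ, ∀ y ∈ Γ, x + y ∈ Γ)
    (hsmul : ∀ x ∈ Γ, ∀ t : ℝ, 0 ≤ t → t • x ∈ Γ) :
    IsProperMap (fun x : Γ => p x) ↔ (LinearMap.ker p : Set V) ∩ Γ = {0} := by
  have hpc : Continuous p := p.continuous_of_finiteDimensional
  constructor
  · intro hprop
    apply Subset.antisymm
    · rintro x ⟨hxk, hxΓ⟩
      by_contra hx0
      have hx0 : x ≠ 0 := hx0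
      -- preimage of {0} is compact
      have hK : IsCompact ((fun x : Γ => p x) ⁻¹' {0}) :=
        hprop.isCompact_preimage isCompact_singleton
      have hKV : IsCompact ((↑) '' ((fun x : Γ => p x) ⁻¹' {0}) : Set V) :=
        hK.image continuous_subtype_val
      obtain ⟨R, hR⟩ := isBounded_iff_forall_norm_le.1 hKV.isBounded
      set t : ℝ := (|R| + 1) / ‖x‖ with ht
      have hxn : 0 < ‖x‖ := norm_pos_iff.2 hx0
      have htpos : 0 ≤ t := div_nonneg (by positivity) hxn.le
      have hmem : (t • x) ∈ Γ := hsmul x hxΓ t htpos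
      have hmem' : (⟨t • x, hmem⟩ : Γ) ∈ (fun x : Γ => p x) ⁻¹' {0} := by
        simp [LinearMap.mem_ker.1 hxk]
      have := hR (t • x) ⟨⟨t • x, hmem⟩, hmem', rfl⟩
      rw [norm_smul, Real.norm_of_nonneg htpos, ht, div_mul_cancel₀ _ hxn.ne'] at this
      have : |R| + 1 ≤ |R| := this.trans (le_abs_self R)
      linarith
    · rintro x hx
      simp only [mem_singleton_iff] at hx
      subst hx
      exact ⟨LinearMap.mem_ker.2 (map_zero p), h0⟩
  · intro hker
    rw [isProperMap_iff_isCompact_preimage]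
    refine ⟨(hpc.comp continuous_subtype_val), fun K hK => ?_⟩
    -- find c > 0 with ‖p x‖ ≥ c ‖x‖ on Γ
    have hS : IsCompact (Γ ∩ Metric.sphere (0:V) 1) :=
      ((isCompact_sphere (0:V) 1).inter_left hΓ)
    have hc : ∃ c : ℝ, 0 < c ∧ ∀ x ∈ Γ, c * ‖x‖ ≤ ‖p x‖ := by
      rcases (Γ ∩ Metric.sphere (0:V) 1).eq_empty_or_nonempty with hS0 | hS0
      · refine ⟨1, one_pos, fun x hx => ?_⟩
        rcases eq_or_ne x 0 with rfl | hx0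
        · simp
        · exfalso
          have : ‖x‖⁻¹ • x ∈ Γ ∩ Metric.sphere (0:V) 1 := by
            refine ⟨hsmul x hx _ (by positivity), ?_⟩
            simp [norm_smul, abs_of_nonneg (inv_nonneg.2 (norm_nonneg x)),
              inv_mul_cancel₀ (norm_ne_zero_iff.2 hx0)]
          rw [hS0] at this; exact this
      · obtain ⟨z, hz, hzmin⟩ := hS.exists_isMinOn hS0
          ((hpc.norm.comp continuous_id).continuousOn)
        have hz0 : z ≠ 0 := by
          intro h; have := hz.2; rw [h] at this; simp at this
        have hc0 : 0 < ‖p z‖ := by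
          rw [norm_pos_iff]
          intro h
          have : z ∈ (LinearMap.ker p : Set V) ∩ Γ := ⟨LinearMap.mem_ker.2 h, hz.1⟩
          rw [hker] at this
          exact hz0 this
        refine ⟨‖p z‖, hc0, fun x hx => ?_⟩
        rcases eq_or_ne x 0 with rfl | hx0
        · simp
        · have hxn : 0 < ‖x‖ := norm_pos_iff.2 hx0
          have hmem : ‖x‖⁻¹ • x ∈ Γ ∩ Metric.sphere (0:V) 1 := by
            refine ⟨hsmul x hx _ (by positivity), ?_⟩
            simp [norm_smul, abs_of_nonneg (inv_nonneg.2 (norm_nonneg x)),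
              inv_mul_cancel₀ hxn.ne']
          have this : ‖p z‖ ≤ ‖x‖⁻¹ * ‖p x‖ := by
            have h := hzmin hmem
            simpa [norm_smul, Real.norm_of_nonneg (inv_nonneg.2 (norm_nonneg x))] using h
          calc ‖p z‖ * ‖x‖ ≤ (‖x‖⁻¹ * ‖p x‖) * ‖x‖ := by
                exact mul_le_mul_of_nonneg_right this (norm_nonneg x)
            _ = ‖p x‖ := by field_simp
    obtain ⟨c, hc0, hc⟩ := hc
    -- preimage is compact
    rw [Subtype.isCompact_iff]
    obtain ⟨M, hM⟩ := isBounded_iff_forall_norm_le.1 hK.isBounded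
    have hsub : ((↑) '' ((fun x : Γ => p x) ⁻¹' K) : Set V) = Γ ∩ p ⁻¹' K := by
      ext x
      constructor
      · rintro ⟨⟨y, hy⟩, hy2, rfl⟩; exact ⟨hy, hy2⟩
      · rintro ⟨h1, h2⟩; exact ⟨⟨x, h1⟩, h2, rfl⟩
    rw [hsub]
    have hclosed : IsClosed (Γ ∩ p ⁻¹' K) := hΓ.inter (hK.isClosed.preimage hpc)
    have hbdd : Bornology.IsBounded (Γ ∩ p ⁻¹' K) := by
      rw [isBounded_iff_forall_norm_le]
      refine ⟨M / c, fun x ⟨h1, h2⟩ => ?_⟩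
      have := (hc x h1).trans (hM _ h2)
      rw [le_div_iff₀ hc0, mul_comm]
      exact this
    exact Metric.isCompact_of_isClosed_isBounded hclosed hbdd
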